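/- In majority dynamics on a tree with odd degrees, if a vertex v satisfies ξ_{t+2}(v) ≠ ξ_t(v) for some time t ≥ 0, then there exists a path v = w_t, w_{t-1}, ..., w_0 of distinct vertices in the tree such that for every t' ∈ {0, 1, ..., t}, ξ_{t'+2}(w_{t'}) ≠ ξ_{t'}(w_{t'}) and ξ_{t'+2}(w_{t'}) = ξ_{t+2}(v). -/

import Mathlib

open SimpleGraph Set

variable {V : Type*}

/-- The majority-dynamics process generated by the initial opinion vector `σ`:
`ξ (t+1) v` is the sign of the sum of the opinions `ξ t` over the neighbours of `v`. -/
noncomputable def dyn (G : SimpleGraph V) (σ : V → ℤ) : ℕ → V → ℤ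
  | 0 => σ
  | t + 1 => fun v => if 0 < ∑ᶠ u ∈ G.neighborSet v, dyn G σ t u then 1 else -1

/-- `σ` is a valid vector of opinions, i.e. takes values in `{-1, 1}`. -/
def PM (σ : V → ℤ) : Prop := ∀ v, σ v = 1 ∨ σ v = -1

/-- The degree of a vertex. -/
noncomputable def degree' (G : SimpleGraph V) (v : V) : ℕ := (G.neighborSet v).ncard

/-- A leaf is a vertex of degree 1. -/
def IsLeaf (G : SimpleGraph V) (v : V) : Prop := degree' G v = 1

/-- The number of neighbours of `v` that are leaves. -/
noncomputable def leafNbrs (G : SimpleGraph V) (v : V) : ℕ := {u | G.Adj v u ∧ IsLeaf G u}.ncard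

/-- All degrees of `G` are odd. -/
def OddDegrees (G : SimpleGraph V) : Prop := ∀ v, Odd (degree' G v)

/-- `v` is `t`-stable for the process `ξ`. -/
def Stable (ξ : ℕ → V → ℤ) (v : V) (t : ℕ) : Prop :=
  ∀ s, t ≤ s → s % 2 = t % 2 → ξ (s + 2) v = ξ s v

/- ### Auxiliary lemmas -/

lemma dyn_pm (G : SimpleGraph V) (σ : V → ℤ) (hσ : PM σ) :
    ∀ s v, dyn G σ s v = 1 ∨ dyn G σ s v = -1
  | 0 => hσ
  | s+1 => fun v => by unfold dyn; split <;> simp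

lemma dyn_succ (G : SimpleGraph V) (σ : V → ℤ) (s : ℕ) (v : V) :
    dyn G σ (s+1) v = if 0 < ∑ᶠ u ∈ G.neighborSet v, dyn G σ s u then 1 else -1 := rfl

lemma flip_step [Fintype V] (G : SimpleGraph V) (σ : V → ℤ) (hσ : PM σ) (s : ℕ) (v : V)
    (h : dyn G σ (s+3) v ≠ dyn G σ (s+1) v) :
    ∃ u, G.Adj v u ∧ dyn G σ (s+2) u ≠ dyn G σ s u ∧ dyn G σ (s+2) u = dyn G σ (s+3) v := by
  classical
  have hfin : (G.neighborSet v).Finite := Set.toFinite _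
  set F := hfin.toFinset with hF
  have hcoe : (F : Set V) = G.neighborSet v := hfin.coe_toFinset
  have hsum : ∀ f : V → ℤ, ∑ᶠ u ∈ G.neighborSet v, f u = ∑ u ∈ F, f u := by
    intro f; rw [← hcoe, finsum_mem_coe_finset]
  have e3 : dyn G σ (s+3) v = if 0 < ∑ u ∈ F, dyn G σ (s+2) u then 1 else -1 := by
    rw [dyn_succ, hsum]
  have e1 : dyn G σ (s+1) v = if 0 < ∑ u ∈ F, dyn G σ s u then 1 else -1 := by
    rw [dyn_succ, hsum]
  rw [e3, e1] at h
  by_cases hpos : 0 < ∑ u ∈ F, dyn G σ (s+2) u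
  · rw [if_pos hpos] at h e3
    have h0 : ¬ 0 < ∑ u ∈ F, dyn G σ s u := by
      intro hc; rw [if_pos hc] at h; exact h rfl
    have : ∃ u ∈ F, dyn G σ s u < dyn G σ (s+2) u := by
      by_contra hc
      push_neg at hc
      exact h0 (lt_of_lt_of_le hpos (Finset.sum_le_sum hc))
    obtain ⟨u, huF, hu⟩ := this
    have hadj : G.Adj v u := by
      have := huF; rw [hF, Set.Finite.mem_toFinset] at this; exact this
    have hvals : dyn G σ (s+2) u = 1 ∧ dyn G σ s u = -1 := by
      rcases dyn_pm G σ hσ (s+2) u with h2 | h2 <;> rcases dyn_pm G σ hσ s u with h0' | h0' <;> omega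
    exact ⟨u, hadj, by rw [hvals.1, hvals.2, e3]; norm_num⟩
  · rw [if_neg hpos] at h e3
    push_neg at hpos
    have h0 : 0 < ∑ u ∈ F, dyn G σ s u := by
      by_contra hc; rw [if_neg hc] at h; exact h rfl
    have : ∃ u ∈ F, dyn G σ (s+2) u < dyn G σ s u := by
      by_contra hc
      push_neg at hc
      exact absurd (lt_of_lt_of_le h0 (Finset.sum_le_sum hc)) (not_lt.2 hpos)
    obtain ⟨u, huF, hu⟩ := this
    have hadj : G.Adj v u := by
      have := huF; rw [hF, Set.Finite.mem_toFinset] at this; exact this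
    have hvals : dyn G σ (s+2) u = -1 ∧ dyn G σ s u = 1 := by
      rcases dyn_pm G σ hσ (s+2) u with h2 | h2 <;> rcases dyn_pm G σ hσ s u with h0' | h0' <;> omega
    exact ⟨u, hadj, by rw [hvals.1, hvals.2, e3]; norm_num⟩

def buildWalk (G : SimpleGraph V) (w : ℕ → V) :
    (n : ℕ) → (∀ i, i < n → G.Adj (w i) (w (i+1))) → G.Walk (w 0) (w n)
  | 0, _ => SimpleGraph.Walk.nil
  | n+1, h => (buildWalk G w n fun i hi => h i (Nat.lt_succ_of_lt hi)).concat (h n (Nat.lt_succ_self n))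

lemma buildWalk_support (G : SimpleGraph V) (w : ℕ → V) :
    ∀ n h, (buildWalk G w n h).support = (List.range (n+1)).map w
  | 0, _ => by simp [buildWalk, SimpleGraph.Walk.support_nil, List.range_succ]
  | n+1, h => by
    rw [buildWalk, SimpleGraph.Walk.support_concat, buildWalk_support,
      List.range_succ (n := n+1)]
    simp

lemma buildWalk_length (G : SimpleGraph V) (w : ℕ → V) :
    ∀ n h, (buildWalk G w n h).length = n
  | 0, _ => rfl
  | n+1, h => by
    rw [buildWalk, SimpleGraph.Walk.length_concat, buildWalk_length]

lemma walk_inj {G : SimpleGraph V} (hac : G.IsAcyclic) (w : ℕ → V) (n : ℕ)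
    (hadj : ∀ i, i < n → G.Adj (w i) (w (i+1)))
    (hnb : ∀ i, i + 2 ≤ n → w i ≠ w (i+2)) :
    ∀ i j, i ≤ n → j ≤ n → w i = w j → i = j := by
  by_contra hcon
  push_neg at hcon
  obtain ⟨i0, j0, hi0, hj0, hw0, hne0⟩ := hcon
  have hP : ∃ d, 0 < d ∧ ∃ i, i + d ≤ n ∧ w i = w (i + d) := by
    rcases Nat.lt_or_ge i0 j0 with hlt | hge
    · exact ⟨j0 - i0, by omega, i0, by omega, by rw [hw0]; congr 1; omega⟩
    · exact ⟨i0 - j0, by omega, j0, by omega, by rw [← hw0]; congr 1; omega⟩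
  classical
  set d := Nat.find hP with hd
  obtain ⟨hdpos, i, hin, hw⟩ : 0 < d ∧ ∃ i, i + d ≤ n ∧ w i = w (i + d) := Nat.find_spec hP
  have hmin : ∀ d', d' < d → ¬ (0 < d' ∧ ∃ i, i + d' ≤ n ∧ w i = w (i + d')) :=
    fun d' hd' => Nat.find_min hP hd'
  have hd1 : d ≠ 1 := by
    intro h1
    rw [h1] at hw
    exact (hadj i (by omega)).ne hw
  have hd2 : d ≠ 2 := by
    intro h2
    rw [h2] at hw
    exact hnb i (by omega) hw
  have hd3 : 3 ≤ d := by omega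
  have hwind : ∀ a b, i + 1 ≤ a → a < b → b ≤ i + d → w a ≠ w b := by
    intro a b ha hab hb hwab
    exact hmin (b - a) (by omega) ⟨by omega, a, by omega, by rw [hwab]; congr 1; omega⟩
  have hadj_i : G.Adj (w i) (w (i+1)) := hadj i (by omega)
  let p1 : G.Walk (w (i+1)) (w (i+d)) :=
    (SimpleGraph.Walk.cons hadj_i.symm SimpleGraph.Walk.nil).copy rfl hw
  have hp1 : p1.IsPath := by
    simp [p1, SimpleGraph.Walk.isPath_def, hadj_i.ne']
  let w2 : ℕ → V := fun k => w (i + 1 + k)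
  have hadj2 : ∀ k, k < d - 1 → G.Adj (w2 k) (w2 (k+1)) := by
    intro k hk
    exact hadj (i + 1 + k) (by omega)
  have hend : w2 (d - 1) = w (i + d) := by
    show w (i + 1 + (d - 1)) = w (i + d); congr 1; omega
  let p2 : G.Walk (w (i+1)) (w (i+d)) :=
    (buildWalk G w2 (d-1) hadj2).copy rfl hend
  have hp2 : p2.IsPath := by
    rw [SimpleGraph.Walk.isPath_def]
    simp only [p2, SimpleGraph.Walk.support_copy]
    rw [buildWalk_support]
    refine List.Nodup.map_on ?_ List.nodup_range
    intro x hx y hy hxy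
    simp only [List.mem_range] at hx hy
    rcases lt_trichotomy x y with h | h | h
    · exact absurd hxy (hwind (i+1+x) (i+1+y) (by omega) (by omega) (by omega))
    · exact h
    · exact absurd hxy.symm (hwind (i+1+y) (i+1+x) (by omega) (by omega) (by omega))
  have := hac.path_unique ⟨p1, hp1⟩ ⟨p2, hp2⟩
  have hlen : p1.length = p2.length := by
    rw [Subtype.ext_iff] at this
    exact congrArg SimpleGraph.Walk.length this
  have hl1 : p1.length = 1 := by simp [p1]
  have hl2 : p2.length = d - 1 := by
    simp only [p2, SimpleGraph.Walk.length_copy]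
    exact buildWalk_length G w2 (d-1) hadj2
  omega

lemma exists_chain [Fintype V] (G : SimpleGraph V) (σ : V → ℤ) (hσ : PM σ) :
    ∀ t (v : V), dyn G σ (t+2) v ≠ dyn G σ t v →
      ∃ w : ℕ → V, w t = v ∧ (∀ i, i < t → G.Adj (w i) (w (i+1))) ∧
        ∀ t', t' ≤ t → dyn G σ (t'+2) (w t') ≠ dyn G σ t' (w t') ∧
          dyn G σ (t'+2) (w t') = dyn G σ (t+2) v := by
  intro t
  induction t with
  | zero =>
    intro v h
    refine ⟨fun _ => v, rfl, by omega, ?_⟩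
    intro t' ht'
    interval_cases t'
    exact ⟨h, rfl⟩
  | succ s ih =>
    intro v h
    obtain ⟨u, hadj, hflip, heq⟩ := flip_step G σ hσ s v h
    obtain ⟨w', hw't, hadj', hall'⟩ := ih u hflip
    refine ⟨fun i => if i = s+1 then v else w' i, by simp, ?_, ?_⟩
    · intro i hi
      by_cases his : i = s
      · have e1 : (if i = s + 1 then v else w' i) = u := by
          rw [if_neg (by omega), his, hw't]
        have e2 : (if i + 1 = s + 1 then v else w' (i + 1)) = v := if_pos (by omega)
        show G.Adj (if i = s + 1 then v else w' i) (if i + 1 = s + 1 then v else w' (i + 1))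
        rw [e1, e2]
        exact hadj.symm
      · simp only [if_neg (by omega : i ≠ s + 1), if_neg (by omega : i + 1 ≠ s + 1)]
        exact hadj' i (by omega)
    · intro t' ht'
      by_cases ht1 : t' = s + 1
      · subst ht1
        simp only [if_pos rfl]
        exact ⟨h, rfl⟩
      · simp only [if_neg ht1]
        obtain ⟨ha, hb⟩ := hall' t' (by omega)
        exact ⟨ha, hb.trans heq⟩

/-- If a vertex changes its opinion at time `t+2`, the change travelled to it
along a path `w_t, …, w_0` of distinct vertices: each `w_{t'}` changes its opinion (to the
same value `ξ_{t+2}(v)`) at time `t' + 2`. -/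
theorem opinion_travels [Fintype V] (G : SimpleGraph V) (hT : G.IsTree)
    (hodd : OddDegrees G) (σ : V → ℤ) (hσ : PM σ) (v : V) (t : ℕ)
    (h : dyn G σ (t + 2) v ≠ dyn G σ t v) :
    ∃ w : ℕ → V, w t = v ∧
      (∀ i j, i ≤ t → j ≤ t → w i = w j → i = j) ∧
      (∀ i, i < t → G.Adj (w i) (w (i + 1))) ∧
      (∀ t', t' ≤ t → dyn G σ (t' + 2) (w t') ≠ dyn G σ t' (w t') ∧
        dyn G σ (t' + 2) (w t') = dyn G σ (t + 2) v) := by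
  obtain ⟨w, hwt, hadj, hall⟩ := exists_chain G σ hσ t v h
  have hnb : ∀ i, i + 2 ≤ t → w i ≠ w (i+2) := by
    intro i hi hww
    obtain ⟨h1, h2⟩ := hall i (by omega)
    obtain ⟨h3, h4⟩ := hall (i+2) (by omega)
    rw [← hww] at h3 h4
    rw [h2, h4] at h3
    exact h3 rfl
  exact ⟨w, hwt, walk_inj hT.IsAcyclic w t hadj hnb, hadj, hall⟩
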